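/- Let ℓ: ℝ → ℝ be strictly convex and differentiable. Then B_ℓ(u,v) = B_ℓ(−u,−v) for all u, v ∈ ℝ if and only if there exists a constant c such that ℓ'(v) + ℓ'(−v) = c for all v ∈ ℝ. -/

import Mathlib

/-- Bregman symmetry under negation iff gradient-symmetric. -/
theorem stmt1 (ℓ : ℝ → ℝ) (hd : Differentiable ℝ ℓ) (hconv : StrictConvexOn ℝ Set.univ ℓ) :
    (∀ u v : ℝ,
        ℓ u - ℓ v - deriv ℓ v * (u - v) =
          ℓ (-u) - ℓ (-v) - deriv ℓ (-v) * (-u - -v))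
      ↔ ∃ c : ℝ, ∀ v : ℝ, deriv ℓ v + deriv ℓ (-v) = c := by
  constructor
  · intro h
    refine ⟨2 * deriv ℓ 0, fun v => ?_⟩
    rcases eq_or_ne v 0 with rfl | hv
    · simp only [neg_zero]; ring
    · have h1 := h v 0
      have h2 := h 0 v
      simp only [neg_zero] at h1 h2
      have key : (deriv ℓ v + deriv ℓ (-v)) * v = 2 * deriv ℓ 0 * v := by nlinarith [h1, h2]
      exact mul_right_cancel₀ hv key
  · rintro ⟨c, hc⟩ u v
    have key : ∀ x : ℝ, ℓ x - ℓ (-x) = c * x := by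
      have H : ∀ x : ℝ, HasDerivAt (fun y => ℓ y - ℓ (-y) - c * y)
          (deriv ℓ x + deriv ℓ (-x) - c) x := by
        intro x
        have h1 : HasDerivAt ℓ (deriv ℓ x) x := (hd x).hasDerivAt
        have h2 : HasDerivAt (fun y : ℝ => ℓ (-y)) (deriv ℓ (-x) * (-1)) x :=
          ((hd (-x)).hasDerivAt).comp x (hasDerivAt_neg x)
        have h3 : HasDerivAt (fun y : ℝ => c * y) c x := by
          simpa using (hasDerivAt_id x).const_mul c
        have : HasDerivAt (fun y => ℓ y - ℓ (-y) - c * y) (deriv ℓ x - deriv ℓ (-x) * (-1) - c) x :=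
          (h1.sub h2).sub h3
        convert this using 1
        ring
      have hdf : Differentiable ℝ (fun y : ℝ => ℓ y - ℓ (-y) - c * y) :=
        fun x => (H x).differentiableAt
      have hz : ∀ x : ℝ, deriv (fun y : ℝ => ℓ y - ℓ (-y) - c * y) x = 0 := by
        intro x
        rw [(H x).deriv, hc x]
        ring
      intro x
      have := is_const_of_deriv_eq_zero hdf hz x 0
      simp only [neg_zero, mul_zero] at this
      linarith
    have k1 := key u
    have k2 := key v
    have hv := hc v
    linear_combination k1 - k2 - (u - v) * hv
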